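/- For any graph G with chromatic number χ(G) and first Betti number β(G), the inequality (χ(G) - 1)(χ(G) - 2)/2 ≤ β(G) holds; equivalently (2χ(G) - 3)²/8 - 1/8 ≤ β(G). -/

import Mathlib

open Finset SimpleGraph

/-- Every vertex different from `r` in a connected graph has a neighbor closer to `r`. -/
lemma cbb_exists_closer {V : Type*} (G : SimpleGraph V) (hG : G.Connected) (r u : V)
    (h : u ≠ r) : ∃ w, G.Adj u w ∧ G.dist w r < G.dist u r := by
  obtain ⟨p, hp⟩ := hG.exists_walk_length_eq_dist u r
  have hpos : 0 < G.dist u r := hG.pos_dist_of_ne h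
  cases p with
  | nil => exact absurd rfl h
  | cons h' q =>
    refine ⟨_, h', ?_⟩
    have h1 := SimpleGraph.dist_le q
    simp [SimpleGraph.Walk.length_cons] at hp
    omega

open scoped Classical in
/-- In a connected graph, the number of edges not inside `S` is at least `|V| - |S|`. -/
lemma cbb_edges_outside {V : Type*} [Fintype V] (G : SimpleGraph V) (hG : G.Connected)
    (S : Finset V) (hS : S.Nonempty) :
    Fintype.card V ≤ (G.edgeFinset.filter (fun e => ¬ ∀ x ∈ e, x ∈ S)).card + S.card := by
  obtain ⟨r, hr⟩ := hS
  set f : V → Sym2 V := fun u =>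
    if h : ∃ w, G.Adj u w ∧ G.dist w r < G.dist u r then s(u, h.choose) else s(u, u) with hf
  have key : Sᶜ.card ≤ (G.edgeFinset.filter (fun e => ¬ ∀ x ∈ e, x ∈ S)).card := by
    apply Finset.card_le_card_of_injOn f
    · intro u hu
      rw [Finset.mem_coe, Finset.mem_compl] at hu
      have hne : u ≠ r := fun he => hu (he ▸ hr)
      have hex : ∃ w, G.Adj u w ∧ G.dist w r < G.dist u r := cbb_exists_closer G hG r u hne
      rw [Finset.mem_coe, Finset.mem_filter]
      constructor
      · rw [hf]; simp only [dif_pos hex]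
        rw [SimpleGraph.mem_edgeFinset, SimpleGraph.mem_edgeSet]
        exact hex.choose_spec.1
      · intro hall
        apply hu
        apply hall u
        rw [hf]; simp only [dif_pos hex]
        exact Sym2.mem_mk_left _ _
    · intro u1 hu1 u2 hu2 heq
      rw [Finset.mem_coe, Finset.mem_compl] at hu1 hu2
      have hne1 : u1 ≠ r := fun he => hu1 (he ▸ hr)
      have hne2 : u2 ≠ r := fun he => hu2 (he ▸ hr)
      have hex1 := cbb_exists_closer G hG r u1 hne1
      have hex2 := cbb_exists_closer G hG r u2 hne2
      rw [hf] at heq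
      simp only [dif_pos hex1, dif_pos hex2] at heq
      rw [Sym2.eq_iff] at heq
      rcases heq with ⟨h1, _⟩ | ⟨h1, h2⟩
      · exact h1
      · exfalso
        have d1 := hex1.choose_spec.2
        have d2 := hex2.choose_spec.2
        rw [h2] at d1
        rw [← h1] at d2
        omega
  have := Finset.card_compl (s := S)
  omega

open scoped Classical in
/-- Edges of an induced subgraph inject into edges of `G` inside `S`. -/
lemma cbb_edges_inside {V : Type*} [Fintype V] (G : SimpleGraph V) (S : Finset V) :
    (G.induce (↑S : Set V)).edgeFinset.card ≤
      (G.edgeFinset.filter (fun e => ∀ x ∈ e, x ∈ S)).card := by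
  apply Finset.card_le_card_of_injOn (Sym2.map Subtype.val)
  · intro e he
    induction e with
    | _ a b =>
      rw [Finset.mem_coe, SimpleGraph.mem_edgeFinset, SimpleGraph.mem_edgeSet] at he
      have hadj : G.Adj a.1 b.1 := he
      rw [Finset.mem_coe, Finset.mem_filter]
      constructor
      · rw [Sym2.map_pair_eq, SimpleGraph.mem_edgeFinset, SimpleGraph.mem_edgeSet]
        exact hadj
      · rw [Sym2.map_pair_eq]
        intro x hx
        rw [Sym2.mem_iff] at hx
        rcases hx with h | h
        · subst h; exact Finset.mem_coe.mp a.2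
        · subst h; exact Finset.mem_coe.mp b.2
  · exact Function.Injective.injOn (Sym2.map.injective Subtype.val_injective)

open scoped Classical in
/-- Degree in an induced subgraph counts neighbors inside `S`. -/
lemma cbb_induce_degree {V : Type*} [Fintype V] (G : SimpleGraph V) (S : Finset V)
    (v : (↑S : Set V)) :
    (G.induce (↑S : Set V)).degree v = (S.filter (fun w => G.Adj v.1 w)).card := by
  rw [← SimpleGraph.card_neighborFinset_eq_degree]
  refine Finset.card_bij (fun w _ => (w : V)) ?_ ?_ ?_
  · intro a ha
    rw [SimpleGraph.mem_neighborFinset] at ha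
    have : G.Adj v.1 a.1 := ha
    rw [Finset.mem_filter]
    exact ⟨Finset.mem_coe.mp a.2, this⟩
  · intro a _ b _ hab
    exact Subtype.ext hab
  · intro b hb
    rw [Finset.mem_filter] at hb
    refine ⟨⟨b, Finset.mem_coe.mpr hb.1⟩, ?_, rfl⟩
    rw [SimpleGraph.mem_neighborFinset]
    exact hb.2

set_option maxHeartbeats 2000000 in
open scoped Classical in
/-- For any connected graph `G`, `(χ(G)-1)(χ(G)-2)/2 ≤ β(G)`. -/
theorem chromatic_betti_bound {V : Type*} [Fintype V] (G : SimpleGraph V)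
    (hG : G.Connected) (n : ℕ) (hn : G.chromaticNumber = n) :
    ((n : ℤ) - 1) * ((n : ℤ) - 2) / 2 ≤
      (G.edgeFinset.card : ℤ) - Fintype.card V + 1 := by
  classical
  have hne : Nonempty V := hG.nonempty
  obtain ⟨r⟩ := hne
  -- `n ≠ 0`
  have hn0 : n ≠ 0 := by
    intro h
    subst h
    have : IsEmpty V := G.isEmpty_of_chromaticNumber_eq_zero (by rw [hn]; norm_num)
    exact this.elim r
  -- basic bound `|V| ≤ |E| + 1` from connectedness
  have hbasic : Fintype.card V ≤ G.edgeFinset.card + 1 := by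
    have h := cbb_edges_outside G hG {r} (Finset.singleton_nonempty r)
    have h2 : (G.edgeFinset.filter (fun e => ¬ ∀ x ∈ e, x ∈ ({r} : Finset V))).card ≤
        G.edgeFinset.card := Finset.card_filter_le _ _
    simp only [Finset.card_singleton] at h
    omega
  by_cases hn2 : n ≤ 2
  · have hc : ((Fintype.card V : ℤ)) ≤ (G.edgeFinset.card : ℤ) + 1 := by exact_mod_cast hbasic
    have hn1 : 1 ≤ n := Nat.one_le_iff_ne_zero.mpr hn0
    interval_cases n
    · have h0 : ((1 : ℕ) : ℤ) - 1 = 0 := by norm_num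
      rw [h0, zero_mul, Int.zero_ediv]
      omega
    · have h0 : ((2 : ℕ) : ℤ) - 2 = 0 := by norm_num
      rw [h0, mul_zero, Int.zero_ediv]
      omega
  -- main case : n ≥ 3
  push_neg at hn2
  have hnotcol : ¬ G.Colorable (n - 1) := by
    intro hc
    have := hc.chromaticNumber_le
    rw [hn, Nat.cast_le] at this
    omega
  -- the property of "not (n-1)-colorable" induced subgraphs
  have hPuniv : ¬ (G.induce (↑(Finset.univ : Finset V) : Set V)).Colorable (n - 1) := by
    rw [Finset.coe_univ]
    rintro ⟨c⟩
    exact hnotcol ⟨c.comp G.induceUnivIso.symm.toHom⟩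
  obtain ⟨S, hSmem, hmin⟩ := Finset.exists_min_image
    (Finset.univ.powerset.filter (fun T : Finset V => ¬ (G.induce (↑T : Set V)).Colorable (n - 1)))
    Finset.card
    ⟨Finset.univ, Finset.mem_filter.mpr ⟨Finset.mem_powerset.mpr (Finset.subset_univ _), hPuniv⟩⟩
  have hPS : ¬ (G.induce (↑S : Set V)).Colorable (n - 1) := (Finset.mem_filter.mp hSmem).2
  -- `n ≤ |S|`
  have hcardS : Fintype.card (↑S : Set V) = S.card := by simp
  have hSn : n ≤ S.card := by
    by_contra hc
    push_neg at hc
    apply hPS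
    have hcol := (G.induce (↑S : Set V)).colorable_of_fintype
    rw [hcardS] at hcol
    exact hcol.mono (by omega)
  -- minimal degree in the induced graph is at least `n - 1`
  have hdeg : ∀ v : (↑S : Set V), n - 1 ≤ (G.induce (↑S : Set V)).degree v := by
    intro v
    by_contra hc
    push_neg at hc
    rw [cbb_induce_degree] at hc
    have hvS : v.1 ∈ S := Finset.mem_coe.mp v.2
    set S' := S.erase v.1 with hS'
    have hPS' : (G.induce (↑S' : Set V)).Colorable (n - 1) := by
      by_contra hp
      have hmem' : S' ∈ Finset.univ.powerset.filter
          (fun T : Finset V => ¬ (G.induce (↑T : Set V)).Colorable (n - 1)) :=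
        Finset.mem_filter.mpr ⟨Finset.mem_powerset.mpr (Finset.subset_univ _), hp⟩
      have := hmin S' hmem'
      have hlt : S'.card < S.card := Finset.card_erase_lt_of_mem hvS
      omega
    obtain ⟨c⟩ := hPS'
    -- the colors used by neighbors of `v` inside `S'`
    set U : Finset (Fin (n - 1)) :=
      (S'.filter (fun w => G.Adj v.1 w)).attach.image
        (fun w => c ⟨w.1, Finset.mem_coe.mpr (Finset.mem_of_mem_filter _ w.2)⟩) with hU
    have hUcard : U.card < n - 1 := by
      have h1 : U.card ≤ (S'.filter (fun w => G.Adj v.1 w)).card := by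
        calc U.card ≤ (S'.filter (fun w => G.Adj v.1 w)).attach.card :=
              Finset.card_image_le
          _ = _ := Finset.card_attach
      have h2 : (S'.filter (fun w => G.Adj v.1 w)).card ≤
          (S.filter (fun w => G.Adj v.1 w)).card :=
        Finset.card_le_card (Finset.filter_subset_filter _ (Finset.erase_subset _ _))
      omega
    have hc0 : ∃ c0 : Fin (n - 1), c0 ∉ U := by
      by_contra hall
      push_neg at hall
      have : (Finset.univ : Finset (Fin (n - 1))).card ≤ U.card :=
        Finset.card_le_card (fun x _ => hall x)
      rw [Finset.card_univ, Fintype.card_fin] at this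
      omega
    obtain ⟨c0, hc0⟩ := hc0
    apply hPS
    refine ⟨SimpleGraph.Coloring.mk
      (fun x => if h : x.1 = v.1 then c0 else
        c ⟨x.1, Finset.mem_coe.mpr (Finset.mem_erase.mpr ⟨h, Finset.mem_coe.mp x.2⟩)⟩) ?_⟩
    intro a b hab
    have hadj : G.Adj a.1 b.1 := hab
    have hne : a.1 ≠ b.1 := G.ne_of_adj hadj
    by_cases ha : a.1 = v.1 <;> by_cases hb : b.1 = v.1
    · exact absurd (ha.trans hb.symm) hne
    · simp only [dif_pos ha, dif_neg hb]
      intro hcontra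
      apply hc0
      rw [hU]
      apply Finset.mem_image.mpr
      have hbmem : b.1 ∈ S'.filter (fun w => G.Adj v.1 w) := by
        rw [Finset.mem_filter]
        exact ⟨Finset.mem_erase.mpr ⟨hb, Finset.mem_coe.mp b.2⟩, ha ▸ hadj⟩
      exact ⟨⟨b.1, hbmem⟩, Finset.mem_attach _ _, hcontra.symm⟩
    · simp only [dif_neg ha, dif_pos hb]
      intro hcontra
      apply hc0
      rw [hU]
      apply Finset.mem_image.mpr
      have hamem : a.1 ∈ S'.filter (fun w => G.Adj v.1 w) := by
        rw [Finset.mem_filter]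
        exact ⟨Finset.mem_erase.mpr ⟨ha, Finset.mem_coe.mp a.2⟩, hb ▸ hadj.symm⟩
      exact ⟨⟨a.1, hamem⟩, Finset.mem_attach _ _, hcontra⟩
    · simp only [dif_neg ha, dif_neg hb]
      have : (G.induce (↑S' : Set V)).Adj
          ⟨a.1, Finset.mem_coe.mpr (Finset.mem_erase.mpr ⟨ha, Finset.mem_coe.mp a.2⟩)⟩
          ⟨b.1, Finset.mem_coe.mpr (Finset.mem_erase.mpr ⟨hb, Finset.mem_coe.mp b.2⟩)⟩ := hadj
      exact c.valid this
  -- handshake lemma for the induced subgraph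
  set mH := (G.induce (↑S : Set V)).edgeFinset.card with hmH
  have hhs : S.card * (n - 1) ≤ 2 * mH := by
    have hsum := SimpleGraph.sum_degrees_eq_twice_card_edges (G.induce (↑S : Set V))
    calc S.card * (n - 1)
        = ∑ _v : (↑S : Set V), (n - 1) := by
          rw [Finset.sum_const, smul_eq_mul, Finset.card_univ, hcardS]
      _ ≤ ∑ v : (↑S : Set V), (G.induce (↑S : Set V)).degree v :=
          Finset.sum_le_sum (fun v _ => hdeg v)
      _ = 2 * mH := hsum
  -- edge counting
  have hSne : S.Nonempty := Finset.card_pos.mp (by omega)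
  have hout := cbb_edges_outside G hG S hSne
  have hin := cbb_edges_inside G S
  have hsplit : (G.edgeFinset.filter (fun e => ∀ x ∈ e, x ∈ S)).card
      + (G.edgeFinset.filter (fun e => ¬ ∀ x ∈ e, x ∈ S)).card = G.edgeFinset.card :=
    Finset.card_filter_add_card_filter_not (fun e => ∀ x ∈ e, x ∈ S)
  rw [← hmH] at hin
  have h1 : (S.card : ℤ) * ((n : ℤ) - 1) ≤ 2 * (mH : ℤ) := by
    have : 1 ≤ n := by omega
    zify [this] at hhs
    linarith
  have key : ((n : ℤ) - 1) * ((n : ℤ) - 2) ≤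
      2 * ((G.edgeFinset.card : ℤ) - (Fintype.card V : ℤ) + 1) := by
    have h2 : (n : ℤ) ≤ (S.card : ℤ) := by exact_mod_cast hSn
    have h3 : (3 : ℤ) ≤ (n : ℤ) := by exact_mod_cast hn2
    have h4 : (mH : ℤ) ≤ ((G.edgeFinset.filter (fun e => ∀ x ∈ e, x ∈ S)).card : ℤ) := by
      exact_mod_cast hin
    have h5 : ((G.edgeFinset.filter (fun e => ∀ x ∈ e, x ∈ S)).card : ℤ)
        + ((G.edgeFinset.filter (fun e => ¬ ∀ x ∈ e, x ∈ S)).card : ℤ)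
        = (G.edgeFinset.card : ℤ) := by exact_mod_cast hsplit
    have h6 : (Fintype.card V : ℤ) ≤
        ((G.edgeFinset.filter (fun e => ¬ ∀ x ∈ e, x ∈ S)).card : ℤ) + (S.card : ℤ) := by
      exact_mod_cast hout
    nlinarith [mul_nonneg (by linarith : (0:ℤ) ≤ (S.card : ℤ) - (n : ℤ))
      (by linarith : (0:ℤ) ≤ (n : ℤ) - 3)]
  calc ((n : ℤ) - 1) * ((n : ℤ) - 2) / 2
      ≤ 2 * ((G.edgeFinset.card : ℤ) - (Fintype.card V : ℤ) + 1) / 2 :=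
        Int.ediv_le_ediv (by norm_num) key
    _ = (G.edgeFinset.card : ℤ) - (Fintype.card V : ℤ) + 1 :=
        Int.mul_ediv_cancel_left _ (by norm_num)
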